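/- Let p ≥ 3 be a prime and let G = (Z₂)^{p+1} ⋊ Z_p, where the generator of Z_p cyclically permutes the first p coordinates of (Z₂)^{p+1} and fixes the last coordinate. Then H = (Z₂)^{p+1} is a maximal subgroup of G, d(G) = 2, and d(H) = p + 1 = [G:H] + 1. -/

import Mathlib

/-- the elementary abelian group `(Z₂)^{p+1}`, with the first `p` coordinates indexed by
`ZMod p` and one extra last coordinate -/
abbrev ElemAb (p : ℕ) : Type := (ZMod p → ZMod 2) × ZMod 2

/-- the automorphism of `(Z₂)^{p+1}` cyclically shifting the first `p` coordinates by `k`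
and fixing the last coordinate -/
def shiftEquiv (p : ℕ) (k : ZMod p) : ElemAb p ≃+ ElemAb p where
  toFun x := (fun i => x.1 (i + k), x.2)
  invFun x := (fun i => x.1 (i - k), x.2)
  left_inv x := by ext i <;> simp
  right_inv x := by ext i <;> simp
  map_add' x y := rfl

/-- the action of `Z_p` on `(Z₂)^{p+1}` cyclically permuting the first `p` coordinates
and fixing the last one -/
def shiftHom (p : ℕ) :
    Multiplicative (ZMod p) →* MulAut (Multiplicative (ElemAb p)) :=
  MonoidHom.mk' (fun c => AddEquiv.toMultiplicative (shiftEquiv p c.toAdd)) (by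
    intro a b
    ext x i
    show x.toAdd.1 (i + (a.toAdd + b.toAdd)) = x.toAdd.1 (i + a.toAdd + b.toAdd)
    rw [add_assoc]
    rfl)

/-- `G = (Z₂)^{p+1} ⋊ Z_p` -/
abbrev ElemAbSd (p : ℕ) : Type :=
  Multiplicative (ElemAb p) ⋊[shiftHom p] Multiplicative (ZMod p)
open Multiplicative SemidirectProduct

namespace Stmt8Aux

def eb (p : ℕ) (j : ZMod p) : ElemAb p := (Pi.single j 1, 0)
def el (p : ℕ) : ElemAb p := (0, 1)

lemma decomp {p : ℕ} [NeZero p] (x : ElemAb p) :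
    x = (∑ j : ZMod p, (x.1 j).val • eb p j) + (x.2).val • el p := by
  refine Prod.ext ?_ ?_
  · funext i
    simp only [eb, el, Prod.fst_add, Prod.fst_sum, Prod.smul_fst, Pi.add_apply,
      Finset.sum_apply, Pi.smul_apply, Pi.single_apply, smul_zero,
      Pi.zero_apply, add_zero]
    simp only [nsmul_eq_mul, mul_ite, mul_one, mul_zero,
      Finset.sum_ite_eq, Finset.mem_univ, if_true, ZMod.natCast_zmod_val]
  · simp only [eb, el, Prod.snd_add, Prod.snd_sum, Prod.smul_snd, smul_zero,
      Finset.sum_const_zero, zero_add]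
    simp only [nsmul_eq_mul, mul_one, ZMod.natCast_zmod_val]

example (p : ℕ) [NeZero p] : Module.finrank (ZMod 2) (ElemAb p) = p + 1 := by
  haveI : Fact (Nat.Prime 2) := ⟨Nat.prime_two⟩
  rw [Module.finrank_prod, Module.finrank_pi, Module.finrank_self, ZMod.card]
section Generic
variable {A : Type*} [AddGroup A] {B : Type*} [Group B] {C : Type*} [Group C]

lemma addclosure_top {S : Set (Multiplicative A)} (h : Subgroup.closure S = ⊤) :
    AddSubgroup.closure (Multiplicative.toAdd '' S) = ⊤ := by
  have hle : Subgroup.closure S ≤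
      AddSubgroup.toSubgroup (AddSubgroup.closure (Multiplicative.toAdd '' S)) :=
    (Subgroup.closure_le _).mpr (fun y hy =>
      AddSubgroup.subset_closure (k := Multiplicative.toAdd '' S) ⟨y, hy, rfl⟩)
  rw [eq_top_iff]
  rintro x -
  exact hle (h ▸ Subgroup.mem_top (Multiplicative.ofAdd x))

lemma mulequiv_transfer (e : B ≃* C) {S : Finset B}
    (h : Subgroup.closure (S : Set B) = ⊤) :
    ∃ T : Finset C, T.card = S.card ∧ Subgroup.closure (T : Set C) = ⊤ := by
  classical
  refine ⟨S.image e, Finset.card_image_of_injective _ e.injective, ?_⟩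
  rw [Finset.coe_image, ← MulEquiv.coe_toMonoidHom, ← MonoidHom.map_closure, h,
    Subgroup.map_top_of_surjective _ e.surjective]

end Generic

namespace Stmt8Aux2

open Stmt8Aux

lemma add_mem_of_gens {p : ℕ} [NeZero p] (T : AddSubgroup (ElemAb p))
    (hb : ∀ j, eb p j ∈ T) (hl : el p ∈ T) (x : ElemAb p) : x ∈ T := by
  rw [decomp x]
  exact add_mem (AddSubgroup.sum_mem _ fun j _ => T.nsmul_mem (hb j) _)
    (T.nsmul_mem hl _)

lemma span_top {p : ℕ} {S : Set (ElemAb p)} (h : AddSubgroup.closure S = ⊤) :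
    Submodule.span (ZMod 2) S = ⊤ := by
  have hle : (⊤ : AddSubgroup (ElemAb p)) ≤ (Submodule.span (ZMod 2) S).toAddSubgroup :=
    h ▸ (AddSubgroup.closure_le _).mpr Submodule.subset_span
  rw [eq_top_iff]
  rintro x -
  exact hle (AddSubgroup.mem_top x)

lemma lower_H {p : ℕ} [NeZero p] {S : Finset (ElemAb p)}
    (h : AddSubgroup.closure (S : Set (ElemAb p)) = ⊤) : p + 1 ≤ S.card := by
  haveI : Fact (Nat.Prime 2) := ⟨Nat.prime_two⟩
  have hfr : Module.finrank (ZMod 2) (ElemAb p) = p + 1 := by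
    rw [Module.finrank_prod, Module.finrank_pi, Module.finrank_self, ZMod.card]
  have hspan := span_top h
  calc p + 1 = Module.finrank (ZMod 2) (ElemAb p) := hfr.symm
    _ = Module.finrank (ZMod 2) (⊤ : Submodule (ZMod 2) (ElemAb p)) := (finrank_top _ _).symm
    _ = Module.finrank (ZMod 2) (Submodule.span (ZMod 2) (S : Set (ElemAb p))) := by
        rw [hspan]
    _ ≤ S.card := finrank_span_finset_le_card S

end Stmt8Aux2
lemma mem_toAddSubgroup' {A : Type*} [AddGroup A] (K : Subgroup (Multiplicative A))
    (y : A) : y ∈ Subgroup.toAddSubgroup' K ↔ Multiplicative.ofAdd y ∈ K := Iff.rfl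

namespace Stmt8Aux3
open Stmt8Aux Stmt8Aux2 Multiplicative SemidirectProduct

variable {p : ℕ} [NeZero p]

lemma eb_inj (j j' : ZMod p) (h : eb p j = eb p j') : j = j' := by
  by_contra hne
  have h2 := congrArg (fun v => v.1 j) h
  simp [eb, Pi.single_apply, hne] at h2

open Classical in
noncomputable def genM (p : ℕ) [NeZero p] : Finset (Multiplicative (ElemAb p)) :=
  (Finset.univ.image (fun j : ZMod p => ofAdd (eb p j))) ∪ {ofAdd (el p)}

open Classical in
lemma genM_card : (genM p).card = p + 1 := by
  rw [genM, Finset.card_union_of_disjoint, Finset.card_image_of_injective,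
    Finset.card_singleton, Finset.card_univ, ZMod.card]
  · exact fun a b hab => eb_inj a b (ofAdd.injective hab)
  · rw [Finset.disjoint_singleton_right, Finset.mem_image]
    rintro ⟨j, -, hj⟩
    have h2 := congrArg (fun v => (toAdd v).1 j) hj
    simp [eb, el, Pi.single_apply] at h2

lemma genM_closure : Subgroup.closure ((genM p : Finset (Multiplicative (ElemAb p))) : Set (Multiplicative (ElemAb p))) = ⊤ := by
  set K := Subgroup.closure ((genM p : Finset (Multiplicative (ElemAb p))) : Set (Multiplicative (ElemAb p))) with hK
  rw [eq_top_iff]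
  rintro x -
  have hb : ∀ j, eb p j ∈ Subgroup.toAddSubgroup' K := fun j =>
    (mem_toAddSubgroup' K (eb p j)).mpr (Subgroup.subset_closure
      (by simp only [genM, Finset.coe_union, Finset.coe_image, Finset.coe_univ,
        Finset.coe_singleton, Set.mem_union, Set.mem_image, Set.mem_univ,
        Set.mem_singleton_iff]; exact Or.inl ⟨j, trivial, rfl⟩))
  have hl : el p ∈ Subgroup.toAddSubgroup' K :=
    (mem_toAddSubgroup' K (el p)).mpr (Subgroup.subset_closure
      (by simp only [genM, Finset.coe_union, Finset.coe_image, Finset.coe_univ,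
        Finset.coe_singleton, Set.mem_union, Set.mem_image, Set.mem_univ,
        Set.mem_singleton_iff]; exact Or.inr trivial))
  exact add_mem_of_gens _ hb hl (toAdd x)

lemma H_isLeast (p : ℕ) (hp : p.Prime) :
    IsLeast {m | ∃ S : Finset (SemidirectProduct.inl.range : Subgroup (ElemAbSd p)),
      S.card = m ∧ Subgroup.closure
        (S : Set (SemidirectProduct.inl.range : Subgroup (ElemAbSd p))) = ⊤}
      (p + 1) := by
  haveI : NeZero p := ⟨hp.pos.ne'⟩
  have e := MonoidHom.ofInjective (SemidirectProduct.inl_injective (φ := shiftHom p))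
  constructor
  · obtain ⟨T, hTc, hTtop⟩ := mulequiv_transfer e genM_closure
    exact ⟨T, by rw [hTc, genM_card], hTtop⟩
  · rintro m ⟨S, rfl, hS⟩
    obtain ⟨T, hTc, hTtop⟩ := mulequiv_transfer e.symm hS
    classical
    have hco : ((T.image Multiplicative.toAdd : Finset (ElemAb p)) : Set (ElemAb p))
        = Multiplicative.toAdd '' (T : Set (Multiplicative (ElemAb p))) := Finset.coe_image
    have hlow := lower_H (p := p) (S := T.image Multiplicative.toAdd)
      (by rw [hco]; exact addclosure_top hTtop)
    calc p + 1 ≤ (T.image Multiplicative.toAdd).card := hlow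
      _ = T.card := Finset.card_image_of_injective _ Multiplicative.toAdd.injective
      _ = S.card := hTc
end Stmt8Aux3
namespace Stmt8Aux4
open Stmt8Aux Stmt8Aux2 Stmt8Aux3 Multiplicative SemidirectProduct

variable {p : ℕ}

lemma index_eq (p : ℕ) [NeZero p] :
    (SemidirectProduct.inl.range : Subgroup (ElemAbSd p)).index = p := by
  rw [SemidirectProduct.range_inl_eq_ker_rightHom, Subgroup.index_ker,
    MonoidHom.range_eq_top_of_surjective _ SemidirectProduct.rightHom_surjective,
    Subgroup.card_top, Nat.card_congr Multiplicative.toAdd, Nat.card_zmod]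

lemma coatom (p : ℕ) (hp : p.Prime) :
    IsCoatom (SemidirectProduct.inl.range : Subgroup (ElemAbSd p)) := by
  haveI : NeZero p := ⟨hp.pos.ne'⟩
  constructor
  · intro h
    have h2 := index_eq p
    rw [h, Subgroup.index_top] at h2
    exact hp.one_lt.ne h2
  · intro K hK
    have h2 := Subgroup.relIndex_mul_index hK.le
    rw [index_eq] at h2
    rcases (hp.eq_one_or_self_of_dvd K.index ⟨_, h2.symm.trans (mul_comm _ _)⟩) with h1 | h1
    · exact Subgroup.index_eq_one.mp h1
    · rw [h1] at h2
      have h3 : (SemidirectProduct.inl.range : Subgroup (ElemAbSd p)).relIndex K = 1 :=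
        Nat.eq_of_mul_eq_mul_right hp.pos (h2.trans (one_mul p).symm)
      exact absurd (Subgroup.relIndex_eq_one.mp h3) hK.not_ge

lemma shift_eb [NeZero p] (c : ZMod p) : shiftEquiv p c (eb p 0) = eb p (-c) := by
  have h : ∀ i : ZMod p, Pi.single (M := fun _ : ZMod p => ZMod 2) 0 1 (i + c) =
      Pi.single (M := fun _ : ZMod p => ZMod 2) (-c) 1 i := by
    intro i
    simp only [Pi.single_apply]
    by_cases hi : i = -c
    · subst hi; rw [if_pos (neg_add_cancel c), if_pos rfl]
    · rw [if_neg (fun h => hi (add_eq_zero_iff_eq_neg.mp h)), if_neg hi]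
  exact Prod.ext (funext h) rfl

end Stmt8Aux4
namespace Stmt8Aux5
open Stmt8Aux Stmt8Aux2 Stmt8Aux3 Stmt8Aux4 Multiplicative SemidirectProduct

variable {p : ℕ}

def aa (p : ℕ) : ElemAbSd p := ⟨ofAdd (el p), ofAdd 1⟩
def bb (p : ℕ) : ElemAbSd p := inl (ofAdd (eb p 0))

lemma phi_apply (c : ZMod p) (x : ElemAb p) :
    (shiftHom p (ofAdd c)) (ofAdd x) = ofAdd (shiftEquiv p c x) := rfl

lemma el_add_el : el p + el p = 0 := by
  refine Prod.ext ?_ ?_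
  · show (0 : ZMod p → ZMod 2) + 0 = 0; simp
  · show (1 : ZMod 2) + 1 = 0; decide

lemma aa_sq : aa p * aa p = inr (ofAdd (2 : ZMod p)) := by
  refine SemidirectProduct.ext ?_ ?_
  · show ofAdd (el p) * (shiftHom p (ofAdd 1)) (ofAdd (el p)) = 1
    rw [phi_apply]
    have h1 : shiftEquiv p 1 (el p) = el p := rfl
    rw [h1, ← ofAdd_add, el_add_el, ofAdd_zero]
  · show ofAdd (1 : ZMod p) * ofAdd (1 : ZMod p) = ofAdd (2 : ZMod p)
    rw [← ofAdd_add, one_add_one_eq_two]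

lemma G_two (p : ℕ) (hp : p.Prime) (hp3 : 3 ≤ p) :
    ∃ S : Finset (ElemAbSd p), S.card = 2 ∧ Subgroup.closure (S : Set (ElemAbSd p)) = ⊤ := by
  haveI : NeZero p := ⟨hp.pos.ne'⟩
  haveI : Fact p.Prime := ⟨hp⟩
  haveI : Fact (1 < p) := ⟨by omega⟩
  classical
  refine ⟨{aa p, bb p}, ?_, ?_⟩
  · rw [Finset.card_insert_of_notMem, Finset.card_singleton]
    simp only [Finset.mem_singleton]
    intro h
    have h1 := congrArg SemidirectProduct.right h
    have h2 : (1 : ZMod p) = 0 := by simpa [aa, bb] using congrArg toAdd h1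
    exact one_ne_zero h2
  · set K := Subgroup.closure (({aa p, bb p} : Finset (ElemAbSd p)) : Set (ElemAbSd p)) with hKdef
    have haK : aa p ∈ K := Subgroup.subset_closure (by simp)
    have hbK : bb p ∈ K := Subgroup.subset_closure (by simp)
    have h2K : inr (ofAdd (2 : ZMod p)) ∈ K := aa_sq ▸ mul_mem haK haK
    have h2ne : (2 : ZMod p) ≠ 0 := by
      intro h
      rw [show (2 : ZMod p) = ((2 : ℕ) : ZMod p) by push_cast; ring,
        ZMod.natCast_eq_zero_iff] at h
      have := Nat.le_of_dvd two_pos h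
      omega
    have hinr : ∀ c : ZMod p, inr (ofAdd c) ∈ K := by
      intro c
      have key : ((2⁻¹ * c : ZMod p)).val • (2 : ZMod p) = c := by
        rw [nsmul_eq_mul, ZMod.natCast_zmod_val, mul_comm, ← mul_assoc,
          mul_inv_cancel₀ h2ne, one_mul]
      have heq : inr (ofAdd c) = (inr (ofAdd (2 : ZMod p)) : ElemAbSd p)
          ^ ((2⁻¹ * c : ZMod p)).val := by
        rw [← map_pow, ← ofAdd_nsmul, key]
      rw [heq]
      exact pow_mem h2K _
    have hinrm : ∀ c : Multiplicative (ZMod p), (inr c : ElemAbSd p) ∈ K :=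
      fun c => hinr (toAdd c)
    have hel : inl (ofAdd (el p)) ∈ K := by
      have h := inl_left_mul_inr_right (aa p)
      have h2 : inl (ofAdd (el p)) = aa p * (inr (ofAdd (1 : ZMod p)) : ElemAbSd p)⁻¹ := by
        rw [← h]
        show (inl (ofAdd (el p)) : ElemAbSd p) =
          inl (ofAdd (el p)) * inr (ofAdd (1 : ZMod p)) * (inr (ofAdd (1 : ZMod p)))⁻¹
        rw [mul_inv_cancel_right]
      rw [h2]
      exact mul_mem haK (inv_mem (hinr 1))
    have heb : ∀ j : ZMod p, inl (ofAdd (eb p j)) ∈ K := by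
      intro j
      have h := SemidirectProduct.inl_aut (φ := shiftHom p) (ofAdd (-j)) (ofAdd (eb p 0))
      rw [phi_apply, shift_eb, neg_neg] at h
      rw [h]
      exact mul_mem (mul_mem (hinrm _) hbK) (hinrm _)
    have hinl : ∀ x : Multiplicative (ElemAb p), (inl x : ElemAbSd p) ∈ K := by
      intro x
      have h := add_mem_of_gens (Subgroup.toAddSubgroup' (K.comap (inl : _ →* ElemAbSd p)))
        (fun j => (mem_toAddSubgroup' _ _).mpr (Subgroup.mem_comap.mpr (heb j)))
        ((mem_toAddSubgroup' _ _).mpr (Subgroup.mem_comap.mpr hel)) (toAdd x)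
      exact Subgroup.mem_comap.mp ((mem_toAddSubgroup' _ _).mp h)
    rw [eq_top_iff]
    rintro g -
    rw [← inl_left_mul_inr_right g]
    exact mul_mem (hinl _) (hinrm _)

lemma G_lower (p : ℕ) (hp : p.Prime) (hp3 : 3 ≤ p) {S : Finset (ElemAbSd p)}
    (h : Subgroup.closure (S : Set (ElemAbSd p)) = ⊤) : 2 ≤ S.card := by
  haveI : NeZero p := ⟨hp.pos.ne'⟩
  haveI : Fact (1 < p) := ⟨by omega⟩
  by_contra hlt
  push_neg at hlt
  have hc : S.card = 0 ∨ S.card = 1 := by omega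
  rcases hc with hc | hc
  · rw [Finset.card_eq_zero] at hc
    subst hc
    rw [Finset.coe_empty, Subgroup.closure_empty] at h
    have hu : (inr (ofAdd (1 : ZMod p)) : ElemAbSd p) ∈ (⊥ : Subgroup (ElemAbSd p)) :=
      h.symm ▸ Subgroup.mem_top _
    have h1 := congrArg SemidirectProduct.right (Subgroup.mem_bot.mp hu)
    have h2 : (1 : ZMod p) = 0 := by simpa using congrArg toAdd h1
    exact one_ne_zero h2
  · obtain ⟨g, rfl⟩ := Finset.card_eq_one.mp hc
    rw [Finset.coe_singleton] at h
    set u : ElemAbSd p := inr (ofAdd (1 : ZMod p)) with hu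
    set v : ElemAbSd p := bb p with hv
    obtain ⟨m, hm⟩ := Subgroup.mem_closure_singleton.mp (h.symm ▸ Subgroup.mem_top u)
    obtain ⟨n, hn⟩ := Subgroup.mem_closure_singleton.mp (h.symm ▸ Subgroup.mem_top v)
    have hcomm : u * v = v * u := by
      rw [← hm, ← hn, ← zpow_add, ← zpow_add, add_comm]
    have hL := congrArg (fun z => toAdd z.left) hcomm
    simp only [hu, hv, bb, mul_left, left_inr, right_inr, left_inl, right_inl,
      one_mul, map_one, MulAut.one_apply, mul_one] at hL
    rw [phi_apply, shift_eb] at hL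
    have : (-1 : ZMod p) = 0 := eb_inj _ _ (by simpa using hL)
    rw [neg_eq_zero] at this
    exact one_ne_zero this

end Stmt8Aux5

end Stmt8Aux

/-- In `G = (Z₂)^{p+1} ⋊ Z_p` (with `p ≥ 3` prime, `Z_p` cyclically permuting the first
`p` coordinates), the subgroup `H = (Z₂)^{p+1}` is maximal, `d(G) = 2` and
`d(H) = p + 1 = [G:H] + 1`. -/
theorem stmt_8 (p : ℕ) (hp : p.Prime) (hp3 : 3 ≤ p) :
    IsCoatom (SemidirectProduct.inl.range : Subgroup (ElemAbSd p)) ∧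
    (SemidirectProduct.inl.range : Subgroup (ElemAbSd p)).index = p ∧
    IsLeast {m | ∃ S : Finset (ElemAbSd p),
      S.card = m ∧ Subgroup.closure (S : Set (ElemAbSd p)) = ⊤} 2 ∧
    IsLeast {m | ∃ S : Finset (SemidirectProduct.inl.range : Subgroup (ElemAbSd p)),
      S.card = m ∧ Subgroup.closure (S : Set (SemidirectProduct.inl.range : Subgroup (ElemAbSd p))) = ⊤}
      (p + 1) := by
  haveI : NeZero p := ⟨hp.pos.ne'⟩
  refine ⟨Stmt8Aux.Stmt8Aux4.coatom p hp, Stmt8Aux.Stmt8Aux4.index_eq p,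
    ⟨?_, ?_⟩, Stmt8Aux.Stmt8Aux3.H_isLeast p hp⟩
  · exact Stmt8Aux.Stmt8Aux5.G_two p hp hp3
  · rintro m ⟨S, rfl, hS⟩
    exact Stmt8Aux.Stmt8Aux5.G_lower p hp hp3 hS
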